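/- Let (G,s_1,t_1,…,s_k,t_k) be a problem instance, let x be a key quality, and let L=(P_1,…,P_k) be an x-linkage for (G,s_1,t_1,…,s_k,t_k). Let 1 ≤ j ≤ k, and let B ⊆ V(P_j) be such that whenever uv is an edge of P_j with v ∈ B, also u ∈ B, and such that both Q = P_j|B and R = P_j|(V(P_j)∖B) are non-null. Then there is no planar (Q,R)-matching of cardinality 3 that is internally disjoint from L. -/

import Mathlib

open List

/-! Basic digraph/path definitions.  A digraph on `V` is a relation `G : V → V → Prop`
(looplessness is expressed by `Irreflexive G`).  A (directed) path is a nonempty list of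
distinct vertices in which consecutive vertices are joined by edges of `G`. -/

/-- `uv` is an edge of the path `P`, i.e. `u,v` are consecutive on `P`. -/
def PEdge {V : Type} (P : List V) (u v : V) : Prop := [u, v] <:+: P

/-- `P` is a directed path of the digraph `G`. -/
def IsPath {V : Type} (G : V → V → Prop) (P : List V) : Prop :=
  P ≠ [] ∧ P.Nodup ∧ P.Chain' G

/-- `P` is a minimal path of `G`: for every edge `v_i v_j` of `G` between vertices of `P`,
`j ≤ i + 1`. -/
def IsMinimal {V : Type} (G : V → V → Prop) (P : List V) : Prop :=
  ∀ i j : Fin P.length, G (P.get i) (P.get j) → (j : ℕ) ≤ (i : ℕ) + 1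

/-- `G` is `d`-path-dominant. -/
def PathDominant {V : Type} (d : ℕ) (G : V → V → Prop) : Prop :=
  ∀ P : List V, IsPath G P → IsMinimal G P → P.length = d →
    ∀ v : V, v ∈ P ∨ (∃ w ∈ P, G v w) ∨ (∃ w ∈ P, G w v)

/-- A linkage: a tuple of pairwise vertex-disjoint paths. -/
def IsLinkage {V : Type} (G : V → V → Prop) {k : ℕ} (L : Fin k → List V) : Prop :=
  (∀ i, IsPath G (L i)) ∧ ∀ i j : Fin k, i ≠ j → ∀ v, v ∈ L i → v ∉ L j

/-- `v` is `Q`-outward: `v ∉ Q` and no vertex of `Q` is adjacent from `v`. -/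
def Outward {V : Type} (G : V → V → Prop) (Q : List V) (v : V) : Prop :=
  v ∉ Q ∧ ∀ w ∈ Q, ¬ G v w

/-- `v` is `Q`-inward: `v ∉ Q` and no vertex of `Q` is adjacent to `v`. -/
def Inward {V : Type} (G : V → V → Prop) (Q : List V) (v : V) : Prop :=
  v ∉ Q ∧ ∀ w ∈ Q, ¬ G w v

section Inhab
variable {V : Type} [Inhabited V]

/-- A linkage for the problem instance `(G, s₁, t₁, …, s_k, t_k)`. -/
def IsLinkageFor (G : V → V → Prop) {k : ℕ} (s t : Fin k → V) (L : Fin k → List V) : Prop :=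
  IsLinkage G L ∧ ∀ i, (L i).head! = s i ∧ (L i).getLast! = t i

/-- `x` is a quality: there is an `x`-linkage for the instance. -/
def IsQuality (G : V → V → Prop) {k : ℕ} (s t : Fin k → V) (x : Fin k → ℕ) : Prop :=
  ∃ L : Fin k → List V, IsLinkageFor G s t L ∧ ∀ i, (L i).length = x i

/-- `x` is a key quality: a quality not strictly dominating any other quality. -/
def IsKeyQuality (G : V → V → Prop) {k : ℕ} (s t : Fin k → V) (x : Fin k → ℕ) : Prop :=
  IsQuality G s t x ∧ ¬ ∃ y : Fin k → ℕ, IsQuality G s t y ∧ y ≤ x ∧ y ≠ x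

/-- `v` is an internal vertex of the linkage `M`. -/
def Internal {k : ℕ} (M : Fin k → List V) (v : V) : Prop :=
  (∃ i, v ∈ M i) ∧ ∀ i, v ≠ (M i).head! ∧ v ≠ (M i).getLast!

/-- The linkage `M` is internally disjoint from the linkage `L`. -/
def InternallyDisjointFrom {k l : ℕ} (M : Fin k → List V) (L : Fin l → List V) : Prop :=
  ∀ v, Internal M v → ∀ i, v ∉ L i

/-- A planar `(Q,R)`-matching of cardinality `n`. -/
def IsPlanarMatching (G : V → V → Prop) (Q R : List V) {n : ℕ} (M : Fin n → List V) : Prop :=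
  IsLinkage G M ∧ (∀ j, (M j).length = 2 ∨ (M j).length = 3) ∧
  (List.ofFn fun j => (M j).head!).Sublist Q ∧
  (List.ofFn fun j => (M j).getLast!).Sublist R

/-- A planar `(Q,R)`-matching is `s`-spaced. -/
def SSpaced (Q R : List V) {n : ℕ} (M : Fin n → List V) (s : ℕ) : Prop :=
  (∀ W : List V, W <:+: Q → W.length ≤ s →
    ∀ j j' : Fin n, (∃ v ∈ W, v ∈ M j) → (∃ v ∈ W, v ∈ M j') → j = j') ∧
  (∀ W : List V, W <:+: R → W.length ≤ s →
    ∀ j j' : Fin n, (∃ v ∈ W, v ∈ M j) → (∃ v ∈ W, v ∈ M j') → j = j')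

/-- `A(L)`: vertices outside `V(L)` that are `(M_j ∖ t(M_j))`-inward for some `j`
with `t(M_j) ≠ t_j`. -/
def RailA (G : V → V → Prop) {k : ℕ} (t : Fin k → V) (L : Fin k → List V) : Set V :=
  {v | (∀ i, v ∉ L i) ∧ ∃ j, (L j).getLast! ≠ t j ∧ ∀ w ∈ (L j).dropLast, ¬ G w v}

/-- `B(L)`: vertices outside `V(L)` that are `(M_j ∖ s(M_j))`-outward for some `j`
with `s(M_j) ≠ s_j`. -/
def RailB (G : V → V → Prop) {k : ℕ} (s : Fin k → V) (L : Fin k → List V) : Set V :=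
  {v | (∀ i, v ∉ L i) ∧ ∃ j, (L j).head! ≠ s j ∧ ∀ w ∈ (L j).tail, ¬ G v w}

/-- The confusion of the linkage `L`, namely `|A(L) ∩ B(L)|`. -/
noncomputable def Confusion (G : V → V → Prop) {k : ℕ} (s t : Fin k → V)
    (L : Fin k → List V) : ℕ :=
  (RailA G t L ∩ RailB G s L).ncard

/-- `(L, X, Y)` is a `(k,m,c)`-rail in the problem instance. -/
def IsRail (G : V → V → Prop) {k : ℕ} (s t : Fin k → V) (m c : ℕ)
    (L : Fin k → List V) (X Y : Set V) : Prop :=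
  IsLinkage G L ∧
  (∀ j, (L j).length ≤ 2*m ∧
    ((L j).length < 2*m → (L j).head! = s j ∨ (L j).getLast! = t j)) ∧
  Confusion G s t L ≤ c ∧
  Disjoint X Y ∧
  X ⊆ RailA G t L ∧ Y ⊆ RailB G s L ∧ X ∪ Y = RailA G t L ∪ RailB G s L

end Inhab

/-- The data of a potential rail: a `k`-tuple of paths together with two vertex sets. -/
abbrev RailT (V : Type) (k : ℕ) := (Fin k → List V) × Set V × Set V

section Inhab2
variable {V : Type} [Inhabited V]

/-- The edge relation `(L,X,Y) → (L',X',Y')` between distinct rails. -/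
def RailStep (G : V → V → Prop) {k : ℕ} (r r' : RailT V k) : Prop :=
  r ≠ r' ∧
  (∀ i, ∃ W : List V, IsPath G W ∧ W.head! = (r.1 i).head! ∧
    W.getLast! = (r'.1 i).getLast! ∧
    (∀ v, v ∈ W ↔ v ∈ r.1 i ∨ v ∈ r'.1 i) ∧
    (∀ u v, PEdge W u v ↔ PEdge (r.1 i) u v ∨ PEdge (r'.1 i) u v)) ∧
  (∀ i, ∀ v ∈ r'.1 i, v ∈ r.1 i ∨ v ∈ r.2.1) ∧
  (∀ i, ∀ v ∈ r.1 i, v ∈ r'.1 i ∨ v ∈ r'.2.2) ∧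
  r'.2.1 ⊆ r.2.1 ∧ r.2.2 ⊆ r'.2.2

/-- A path from `s₀` to `t₀` in the `(k,m,c)`-tracker, recorded by its list of
intermediate rail vertices. -/
def IsTrackerPath (G : V → V → Prop) {k : ℕ} (s t : Fin k → V) (m c : ℕ)
    (rs : List (RailT V k)) : Prop :=
  rs ≠ [] ∧ rs.Nodup ∧ rs.Chain' (RailStep G) ∧
  (∀ r ∈ rs, IsRail G s t m c r.1 r.2.1 r.2.2) ∧
  (∀ r ∈ rs.head?, ∀ j, (r.1 j).head! = s j) ∧
  (∀ r ∈ rs.getLast?, ∀ j, (r.1 j).getLast! = t j)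

end Inhab2

/-- A tracker path traces the linkage `P`: each `P j` is the union (as a digraph) of the
`j`-th members of the rails of the path. -/
def Traces {V : Type} {k : ℕ} (rs : List (RailT V k)) (P : Fin k → List V) : Prop :=
  ∀ j, (∀ v, v ∈ P j ↔ ∃ r ∈ rs, v ∈ r.1 j) ∧
       (∀ u v, PEdge (P j) u v ↔ ∃ r ∈ rs, PEdge (r.1 j) u v)

section Dec
variable {V : Type} [DecidableEq V]

/-- `V(L)`, the set of vertices of the linkage `L`, as a finset. -/
def LV {k : ℕ} (L : Fin k → List V) : Finset V :=
  Finset.univ.biUnion fun i => (L i).toFinset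

/-- `B` is acceptable for the linkage `L` (with parameters `d, k`). -/
def Acceptable [Inhabited V] (G : V → V → Prop) (d k : ℕ) (L : Fin k → List V)
    (B : Finset V) : Prop :=
  (∀ j : Fin k, ∀ u v : V, PEdge (L j) u v → v ∈ B → u ∈ B) ∧
  ∀ i j : Fin k, ¬ ∃ M : Fin ((k-1)*d + k^2 + 2) → List V,
    IsPlanarMatching G ((L i).filter (· ∈ B)) ((L j).filter (· ∉ B)) M ∧
    InternallyDisjointFrom M L

/-- Labels along a tracker path, after the first rail: consecutive rails `r, r'`
contribute `|V(M'_j) ∖ V(M_j)|` in coordinate `j`. -/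
def labelFrom {k : ℕ} : RailT V k → List (RailT V k) → (Fin k → ℕ)
  | _, [] => fun _ => 0
  | r, r' :: rest => (fun j => ((r'.1 j).toFinset \ (r.1 j).toFinset).card) + labelFrom r' rest

/-- The total label `l(P)` of a tracker path with rail list `rs`: the edge from `s₀`
contributes `|V(M_j)|`, each rail-to-rail edge contributes the difference counts, and the
edge to `t₀` contributes `0`. -/
def pathLabel {k : ℕ} : List (RailT V k) → (Fin k → ℕ)
  | [] => fun _ => 0
  | r :: rest => (fun j => (r.1 j).toFinset.card) + labelFrom r rest

/-- `Q_{p,j}`: the maximal subpath of `P` with at most `m` vertices whose last vertex is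
the last vertex of `P` among `v_1, …, v_p` (null if there is none). -/
def Qseg (m : ℕ) (e : List V) (p : ℕ) (P : List V) : List V :=
  (P.filter (· ∈ e.take p)).drop ((P.filter (· ∈ e.take p)).length - m)

/-- `R_{p,j}`: the maximal subpath of `P` with at most `m` vertices whose first vertex is
the first vertex of `P` among `v_{p+1}, …, v_n` (null if there is none). -/
def Rseg (m : ℕ) (e : List V) (p : ℕ) (P : List V) : List V :=
  (P.filter (· ∈ e.drop p)).take m

/-- `M_{p,j} = Q_{p,j} ∪ R_{p,j}` (together with the connecting edge of `P` when both
are non-null). -/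
def Mseg (m : ℕ) (e : List V) (p : ℕ) (P : List V) : List V :=
  Qseg m e p P ++ Rseg m e p P

end Dec

section H
variable {V : Type} [Inhabited V] [DecidableEq V]

lemma gl_cons (a : V) (l : List V) (h : l ≠ []) : (a::l).getLast! = l.getLast! := by
  cases l with
  | nil => exact absurd rfl h
  | cons b m => rfl

lemma gl_app (X l : List V) (h : l ≠ []) : (X ++ l).getLast! = l.getLast! := by
  induction X with
  | nil => rfl
  | cons a X ih =>
      rw [cons_append, gl_cons _ _ (by simp [h]), ih]

lemma hd_app (A : List V) (a : V) (X Y : List V) :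
    (A ++ a :: X).head! = (A ++ a :: Y).head! := by
  cases A <;> rfl

lemma hd?_app (A : List V) (a : V) (X Y : List V) :
    (A ++ a :: X).head? = (A ++ a :: Y).head? := by
  cases A <;> rfl

lemma mem_gl_cons {x a : V} {l : List V} (h : x ∈ l.getLast?) : x ∈ (a::l).getLast? := by
  cases l with
  | nil => simp at h
  | cons b m => rwa [getLast?_cons_cons]

lemma gl_mem (l : List V) (h : l ≠ []) : l.getLast! ∈ l := by
  induction l with
  | nil => exact absurd rfl h
  | cons a m ih =>
      cases m with
      | nil => simp [List.getLast!]
      | cons b m' => rw [gl_cons _ _ (by simp)]; exact mem_cons_of_mem _ (ih (by simp))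

lemma allnot (B : Finset V) : ∀ (P : List V) (a : V),
    (∀ u v, [u,v] <:+: (a::P) → v ∈ B → u ∈ B) → a ∉ B → ∀ v ∈ a::P, v ∉ B := by
  intro P
  induction P with
  | nil => intro a _ ha v hv; simp at hv; subst hv; exact ha
  | cons b P ih =>
      intro a h ha v hv
      have hba : b ∉ B := fun hb => ha (h a b ⟨[], P, rfl⟩ hb)
      rcases mem_cons.mp hv with rfl | hv
      · exact ha
      · exact ih b (fun u v huv => h u v (huv.trans ⟨[a], [], by simp⟩)) hba v hv

lemma split_pref (B : Finset V) : ∀ (P : List V),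
    (∀ u v, [u,v] <:+: P → v ∈ B → u ∈ B) →
    P = P.filter (· ∈ B) ++ P.filter (· ∉ B) := by
  intro P
  induction P with
  | nil => intro _; rfl
  | cons a P ih =>
      intro h
      by_cases ha : a ∈ B
      · have := ih (fun u v huv => h u v (huv.trans ⟨[a], [], by simp⟩))
        have e1 : (a::P).filter (· ∈ B) = a :: P.filter (· ∈ B) := by simp [filter_cons, ha]
        have e2 : (a::P).filter (· ∉ B) = P.filter (· ∉ B) := by simp [filter_cons, ha]
        rw [e1, e2, cons_append, ← this]
      · have hall := allnot B P a h ha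
        have h1 : (a::P).filter (· ∈ B) = [] := by
          rw [filter_eq_nil_iff]; intro v hv; simpa using hall v hv
        have h2 : (a::P).filter (· ∉ B) = a :: P := by
          rw [filter_eq_self]; intro v hv; simpa using hall v hv
        rw [h1, h2, nil_append]

lemma sub_decomp : ∀ {r : List V} {a : V} {l : List V}, a :: l <+ r →
    ∃ r₁ r₂, r = r₁ ++ a :: r₂ ∧ l <+ r₂ := by
  intro r
  induction r with
  | nil => intro a l h; exact absurd h (by simp)
  | cons b r ih =>
      intro a l h
      cases h with
      | cons _ h =>
          obtain ⟨r₁, r₂, rfl, hl⟩ := ih h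
          exact ⟨b :: r₁, r₂, rfl, hl⟩
      | cons_cons _ h => exact ⟨[], r, rfl, h⟩

end H

section Aux
variable {V : Type} [Inhabited V] [DecidableEq V]

lemma key_aux (G : V → V → Prop) (k : ℕ) (s t : Fin k → V) (x : Fin k → ℕ)
    (hx : IsKeyQuality G s t x)
    (L : Fin k → List V) (hL : IsLinkageFor G s t L) (hLx : ∀ i, (L i).length = x i)
    (j : Fin k) (B : Finset V)
    (hBdown : ∀ u v : V, PEdge (L j) u v → v ∈ B → u ∈ B)
    (A A' C0 D2 mid : List V) (h1 e1 : V)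
    (hQeq : (L j).filter (· ∈ B) = A ++ h1 :: A')
    (hReq : (L j).filter (· ∉ B) = C0 ++ e1 :: D2)
    (hA' : A' ≠ []) (hC0 : C0 ≠ [])
    (hM1chain : List.Chain' G ((h1 :: mid) ++ [e1]))
    (hmidnotin : ∀ v ∈ mid, ∀ i, v ∉ L i)
    (hmidnd : mid.Nodup) (hmidlen : mid.length ≤ 1) : False := by
  set P := L j with hPdef
  set Q := P.filter (· ∈ B) with hQdef
  set R := P.filter (· ∉ B) with hRdef
  obtain ⟨hPne, hPnd, hPch⟩ : IsPath G P := hL.1.1 j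
  have hPQR : P = Q ++ R := split_pref B P (fun u v h => hBdown u v h)
  have hQnd : Q.Nodup := (filter_sublist (l := P)).nodup hPnd
  have hRnd : R.Nodup := (filter_sublist (l := P)).nodup hPnd
  have hQsubP : ∀ v ∈ Q, v ∈ P := fun v hv => (filter_sublist (l := P)).subset hv
  have hRsubP : ∀ v ∈ R, v ∈ P := fun v hv => (filter_sublist (l := P)).subset hv
  have hQB : ∀ v ∈ Q, v ∈ B := fun v hv => by simpa using (mem_filter.mp hv).2
  have hRB : ∀ v ∈ R, v ∉ B := fun v hv => by simpa using (mem_filter.mp hv).2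
  set N : List V := (A ++ [h1]) ++ (mid ++ (e1 :: D2)) with hNdef
  have hQ1 : Q = (A ++ [h1]) ++ A' := by rw [hQeq]; simp
  have hNform : N = A ++ h1 :: (mid ++ (e1 :: D2)) := by simp [hNdef]
  have hPform : P = A ++ h1 :: (A' ++ R) := by rw [hPQR, hQ1]; simp
  have hP2 : P = (Q ++ C0) ++ (e1 :: D2) := by rw [hPQR, hReq]; simp
  have hmidP : ∀ v ∈ mid, v ∉ P := fun v hv => hmidnotin v hv j
  have hQpre_sub : ∀ v ∈ A ++ [h1], v ∈ Q := by
    intro v hv; rw [hQ1]; exact mem_append_left _ hv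
  have hRsuf_sub : ∀ v ∈ e1 :: D2, v ∈ R := by
    intro v hv; rw [hReq]; exact mem_append_right _ hv
  have memN : ∀ v ∈ N, v ∈ P ∨ v ∈ mid := by
    intro v hv
    rcases mem_append.mp hv with hv | hv
    · exact Or.inl (hQsubP _ (hQpre_sub _ hv))
    · rcases mem_append.mp hv with hv | hv
      · exact Or.inr hv
      · exact Or.inl (hRsubP _ (hRsuf_sub _ hv))
  have hNne : N ≠ [] := by simp [hNdef]
  have hQprend : (A ++ [h1]).Nodup := (nodup_append.mp (hQ1 ▸ hQnd)).1
  have hRsufnd : (e1 :: D2).Nodup := (nodup_append.mp (hReq ▸ hRnd)).2.1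
  have hNnd : N.Nodup := by
    rw [hNdef, nodup_append]
    refine ⟨hQprend, ?_, ?_⟩
    · rw [nodup_append]
      refine ⟨hmidnd, hRsufnd, ?_⟩
      intro v hv w hv' hvw; rw [← hvw] at hv'
      exact hmidP v hv (hRsubP _ (hRsuf_sub _ hv'))
    · intro v hv w hv' hvw; rw [← hvw] at hv'
      have hvQ := hQpre_sub _ hv
      rcases mem_append.mp hv' with hv' | hv'
      · exact hmidP v hv' (hQsubP _ hvQ)
      · exact hRB _ (hRsuf_sub _ hv') (hQB _ hvQ)
  have chainQpre : Chain' G (A ++ [h1]) := by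
    have h2 : Chain' G ((A ++ [h1]) ++ (A' ++ R)) := by
      have e : A ++ h1 :: (A' ++ R) = (A ++ [h1]) ++ (A' ++ R) := by simp
      rw [← e]; exact hPform ▸ hPch
    exact (isChain_append.mp h2).1
  have chainRsuf : Chain' G (e1 :: D2) := (isChain_append.mp (hP2 ▸ hPch)).2.1
  have hM1chain' : Chain' G (h1 :: (mid ++ [e1])) := by
    have e : (h1 :: mid) ++ [e1] = h1 :: (mid ++ [e1]) := by simp
    rw [← e]; exact hM1chain
  have hM1split := isChain_append.mp hM1chain
  have hconn_h1 : ∀ y ∈ (mid ++ [e1]).head?, G h1 y := (isChain_cons.mp hM1chain').1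
  have chainTail : Chain' G (mid ++ (e1 :: D2)) := by
    refine isChain_append.mpr ?_
    refine ⟨hM1split.1.tail, chainRsuf, ?_⟩
    intro xx hxx yy hyy
    have hyy' : yy = e1 := by
      have h := hyy; simp only [head?_cons, Option.mem_def, Option.some.injEq] at h
      exact h.symm
    rw [hyy']
    exact hM1split.2.2 xx (mem_gl_cons hxx) e1 (by simp)
  have hNch : Chain' G N := by
    rw [hNdef]; refine isChain_append.mpr ?_
    refine ⟨chainQpre, chainTail, ?_⟩
    intro xx hxx yy hyy
    have hxx' : xx = h1 := by
      have h := hxx; rw [getLast?_concat] at h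
      simp only [Option.mem_def, Option.some.injEq] at h
      exact h.symm
    rw [hxx']
    rw [hd?_app mid e1 D2 []] at hyy
    exact hconn_h1 yy hyy
  have hNhead : N.head! = s j := by
    rw [hNform, hd_app A h1 (mid ++ (e1 :: D2)) (A' ++ R), ← hPform]
    exact (hL.2 j).1
  have hNlast : N.getLast! = t j := by
    have e : N = ((A ++ [h1]) ++ mid) ++ (e1 :: D2) := by simp [hNdef]
    rw [e, gl_app _ _ (by simp), ← gl_app (Q ++ C0) (e1 :: D2) (by simp), ← hP2]
    exact (hL.2 j).2
  have eP : P.length = Q.length + R.length := by rw [hPQR]; exact length_append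
  have eQ : Q.length = A.length + 1 + A'.length := by
    rw [hQeq]; simp only [length_append, length_cons]; omega
  have eR : R.length = C0.length + 1 + D2.length := by
    rw [hReq]; simp only [length_append, length_cons]; omega
  have eN : N.length = A.length + 1 + mid.length + 1 + D2.length := by
    rw [hNdef]; simp only [length_append, length_cons, length_nil]; omega
  have hA'len : 1 ≤ A'.length := length_pos_iff.mpr hA'
  have hC0len : 1 ≤ C0.length := length_pos_iff.mpr hC0
  have hPx : P.length = x j := by rw [hPdef]; exact hLx j
  have hNlt : N.length < x j := by omega
  set L' := Function.update L j N with hL'def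
  set y := Function.update x j N.length with hydef
  apply hx.2
  refine ⟨y, ⟨L', ⟨⟨?_, ?_⟩, ?_⟩, ?_⟩, ?_, ?_⟩
  · intro i
    by_cases hi : i = j
    · rw [hL'def, hi, Function.update_self]; exact ⟨hNne, hNnd, hNch⟩
    · rw [hL'def, Function.update_of_ne hi]; exact hL.1.1 i
  · intro i i' hne v hv hv'
    by_cases hi : i = j
    · rw [hL'def, hi, Function.update_self] at hv
      have hne' : j ≠ i' := hi ▸ hne
      rw [hL'def, Function.update_of_ne (Ne.symm hne')] at hv'
      rcases memN v hv with hvP | hvm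
      · exact hL.1.2 j i' hne' v hvP hv'
      · exact hmidnotin v hvm i' hv'
    · rw [hL'def, Function.update_of_ne hi] at hv
      by_cases hi' : i' = j
      · rw [hL'def, hi', Function.update_self] at hv'
        rcases memN v hv' with hvP | hvm
        · exact hL.1.2 i j hi v hv hvP
        · exact hmidnotin v hvm i hv
      · rw [hL'def, Function.update_of_ne hi'] at hv'
        exact hL.1.2 i i' hne v hv hv'
  · intro i
    by_cases hi : i = j
    · rw [hi, hL'def, Function.update_self]; exact ⟨hNhead, hNlast⟩
    · rw [hL'def, Function.update_of_ne hi]; exact hL.2 i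
  · intro i
    by_cases hi : i = j
    · rw [hi, hL'def, hydef, Function.update_self, Function.update_self]
    · rw [hL'def, hydef, Function.update_of_ne hi, Function.update_of_ne hi]; exact hLx i
  · intro i
    by_cases hi : i = j
    · rw [hi, hydef, Function.update_self]; exact le_of_lt hNlt
    · rw [hydef, Function.update_of_ne hi]
  · intro h
    have he := congrFun h j
    rw [hydef, Function.update_self] at he
    omega

end Aux

theorem stmt7 {V : Type} [Fintype V] [DecidableEq V] [Inhabited V]
    (G : V → V → Prop) (hG : Irreflexive G)
    (k : ℕ) (s t : Fin k → V) (x : Fin k → ℕ) (hx : IsKeyQuality G s t x)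
    (L : Fin k → List V) (hL : IsLinkageFor G s t L) (hLx : ∀ i, (L i).length = x i)
    (j : Fin k) (B : Finset V) (hBsub : ∀ v ∈ B, v ∈ L j)
    (hBdown : ∀ u v : V, PEdge (L j) u v → v ∈ B → u ∈ B)
    (hQ : (L j).filter (· ∈ B) ≠ []) (hR : (L j).filter (· ∉ B) ≠ []) :
    ¬ ∃ M : Fin 3 → List V,
      IsPlanarMatching G ((L j).filter (· ∈ B)) ((L j).filter (· ∉ B)) M ∧
      InternallyDisjointFrom M L := by
  rintro ⟨M, ⟨⟨hMpaths, hMdisj⟩, hMlen, hheads, hlasts⟩, hint⟩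
  have hofn : ∀ (f : Fin 3 → V), List.ofFn f = [f 0, f 1, f 2] := by
    intro f
    simp [List.ofFn_succ]
  rw [hofn] at hheads hlasts
  have hsub12 : [(M 1).head!, (M 2).head!] <+ (L j).filter (· ∈ B) :=
    (List.Sublist.cons _ (List.Sublist.refl _)).trans hheads
  obtain ⟨A, A', hQeq, hsubA⟩ := sub_decomp hsub12
  have h2A : (M 2).head! ∈ A' := hsubA.subset (by simp)
  have hA'ne : A' ≠ [] := ne_nil_of_mem h2A
  have hsub01 : [(M 0).getLast!, (M 1).getLast!] <+ (L j).filter (· ∉ B) :=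
    (List.Sublist.cons₂ _ (List.Sublist.cons₂ _ (List.nil_sublist _))).trans hlasts
  obtain ⟨C, D, hReq0, hsubD⟩ := sub_decomp hsub01
  have he1D : (M 1).getLast! ∈ D := hsubD.subset (by simp)
  obtain ⟨D1, D2, hDeq⟩ := List.append_of_mem he1D
  have hReq : (L j).filter (· ∉ B) =
      (C ++ (M 0).getLast! :: D1) ++ (M 1).getLast! :: D2 := by
    rw [hReq0, hDeq]; simp
  have hC0ne : (C ++ (M 0).getLast! :: D1) ≠ [] := by simp
  obtain ⟨hM1ne, hM1nd, hM1ch⟩ : IsPath G (M 1) := hMpaths 1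
  rcases hMlen 1 with hl2 | hl3
  · obtain ⟨a, b, hM1⟩ := List.length_eq_two.mp hl2
    have hh : (M 1).head! = a := by rw [hM1]; rfl
    have hg : (M 1).getLast! = b := by
      rw [hM1, gl_cons _ _ (by simp)]; simp [List.getLast!]
    refine key_aux G k s t x hx L hL hLx j B hBdown A A' _ D2 []
      ((M 1).head!) ((M 1).getLast!) hQeq hReq hA'ne hC0ne ?_ (by simp)
      (by simp) (by simp)
    rw [hh, hg]
    simpa [hM1] using hM1ch
  · obtain ⟨a, w, c, hM1⟩ := List.length_eq_three.mp hl3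
    have hh : (M 1).head! = a := by rw [hM1]; rfl
    have hg : (M 1).getLast! = c := by
      rw [hM1, gl_cons _ _ (by simp), gl_cons _ _ (by simp)]; simp [List.getLast!]
    have hwm : w ∈ M 1 := by rw [hM1]; simp
    have hnd : a ≠ w ∧ w ≠ c := by
      rw [hM1] at hM1nd
      simp only [List.nodup_cons, List.mem_cons, List.mem_singleton] at hM1nd
      exact ⟨fun h => hM1nd.1 (Or.inl h), fun h => hM1nd.2.1 (Or.inl h)⟩
    have hwint : ∀ i, w ∉ L i := by
      apply hint w
      constructor
      · exact ⟨1, hwm⟩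
      · intro i
        by_cases hi : i = 1
        · subst hi
          rw [hh, hg]
          exact ⟨fun h => hnd.1 h.symm, hnd.2⟩
        · have hwni : w ∉ M i := hMdisj 1 i (fun h => hi h.symm) w hwm
          have hine : M i ≠ [] := (hMpaths i).1
          exact ⟨fun h => hwni (h ▸ List.head!_mem_self hine),
                 fun h => hwni (h ▸ gl_mem _ hine)⟩
    refine key_aux G k s t x hx L hL hLx j B hBdown A A' _ D2 [w]
      ((M 1).head!) ((M 1).getLast!) hQeq hReq hA'ne hC0ne ?_
      (by intro v hv i; simp at hv; subst hv; exact hwint i)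
      (by simp) (by simp)
    rw [hh, hg]
    simpa [hM1] using hM1ch
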